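/- arXiv:2507.07022 — 3 statements merged into one kernel-verified Lean document; each statement's English description precedes it below -/
import Mathlib

section
/- Let Gamma be the linear relation graph of I = B_t(u). For every i = 1,...,d, one has |B_i| >= 2 if and only if B_i ⊆ V(Gamma), where B_i = [t_1 + ... + t_{i-1} + 1, j_i]. -/
open Finset MvPolynomial

/-! Common definitions for principal vector-spread Borel ideals
(Crupi–Ficarra–Lax, "Principal vector-spread Borel ideals").

Throughout, `S = K[x_1,…,x_n]` is realized as `MvPolynomial (Fin n) K`, and the
variable `x_p` (1-based position `p ∈ [1,n]`) is `X (p-1)`. -/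

open Fin.NatCast in
/-- The variable `x_p` of `K[x_1,…,x_n]`, for a 1-based position `p ∈ [1,n]`. -/
noncomputable def xv (K : Type*) [Field K] (n : ℕ) [NeZero n] (p : ℕ) :
    MvPolynomial (Fin n) K := MvPolynomial.X ((p - 1 : ℕ) : Fin n)

/-- The squarefree monomial `x_{i 1} ⋯ x_{i e}` determined by the index function `i`. -/
noncomputable def monOf (K : Type*) [Field K] (n : ℕ) [NeZero n] (e : ℕ) (i : ℕ → ℕ) :
    MvPolynomial (Fin n) K := ∏ r ∈ Finset.Icc 1 e, xv K n (i r)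

/-- Index functions of the `t`-spread monomials `x_{i 1} ⋯ x_{i e}` with `i r ≤ J r` for
all `r = 1,…,e`.  (These monomials form the minimal monomial generating set of the
principal `t`-spread Borel ideal `B_t(x_{J 1} ⋯ x_{J e})`.) -/
def spreadIdx (e : ℕ) (t J : ℕ → ℕ) : Set (ℕ → ℕ) :=
  {i | (∀ r, 1 ≤ r → r ≤ e → 1 ≤ i r ∧ i r ≤ J r) ∧
    (∀ r, 1 ≤ r → r + 1 ≤ e → i r + t r ≤ i (r + 1))}

/-- The principal `t`-spread Borel ideal `B_t(x_{J 1} ⋯ x_{J e})`: the ideal generated by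
all `t`-spread monomials `x_{i 1} ⋯ x_{i e}` with `i r ≤ J r` for all `r`. -/
noncomputable def tBorel (K : Type*) [Field K] (n : ℕ) [NeZero n] (e : ℕ) (t J : ℕ → ℕ) :
    Ideal (MvPolynomial (Fin n) K) :=
  Ideal.span ((fun i => monOf K n e i) '' spreadIdx e t J)

/-- The monomial prime ideal `P_A = (x_p : p ∈ A)`, for a set `A` of 1-based positions. -/
noncomputable def pA (K : Type*) [Field K] (n : ℕ) [NeZero n] (A : Set ℕ) :
    Ideal (MvPolynomial (Fin n) K) := Ideal.span (xv K n '' A)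

/-- The `t`-spread support `supp_t(x_{i 1} ⋯ x_{i e}) = ⋃_{s=1}^{e-1} [i s, i s + t s - 1]`. -/
def tSupp (e : ℕ) (t : ℕ → ℕ) (i : ℕ → ℕ) : Set ℕ :=
  ⋃ s ∈ Finset.Icc 1 (e - 1), Set.Icc (i s) (i s + t s - 1)

/-- The `k`-th symbolic power of a (squarefree monomial) ideal: the intersection of the
`k`-th powers of its minimal primes. -/
noncomputable def symbPow {R : Type*} [CommRing R] (I : Ideal R) (k : ℕ) : Ideal R :=
  ⨅ P ∈ I.minimalPrimes, P ^ k

/-- The Alexander dual `⨅_{v} P_{supp v}` of the squarefree monomial ideal whose minimal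
monomial generators are the degree `e` squarefree monomials indexed by `gen`. -/
noncomputable def alexDualOf (K : Type*) [Field K] (n : ℕ) [NeZero n] (e : ℕ)
    (gen : Set (ℕ → ℕ)) : Ideal (MvPolynomial (Fin n) K) :=
  ⨅ i ∈ gen, pA K n (i '' Set.Icc 1 e)

/-- The height of an ideal: the infimum of the heights of its minimal primes, the height
of a prime being its height in the poset of prime ideals. -/
noncomputable def idealHeight {R : Type*} [CommRing R] (I : Ideal R) : ℕ∞ :=
  ⨅ (p : PrimeSpectrum R) (_ : p.asIdeal ∈ I.minimalPrimes), Order.height p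

/-- The depth of the module `M` with respect to the ideal `P`: the supremum of the lengths
of `M`-regular sequences consisting of elements of `P`. -/
noncomputable def depthWrt (R : Type*) (M : Type*) [CommRing R] [AddCommGroup M]
    [Module R M] (P : Ideal R) : ℕ∞ :=
  ⨆ (k : ℕ) (_ : ∃ x : Fin k → R, (∀ a, x a ∈ P) ∧
    RingTheory.Sequence.IsRegular M (List.ofFn x)), (k : ℕ∞)

/-- The (Krull) dimension of a module `M`: the Krull dimension of `R / ann M`. -/
noncomputable def modKrullDim (R : Type*) (M : Type*) [CommRing R] [AddCommGroup M]
    [Module R M] : WithBot ℕ∞ := ringKrullDim (R ⧸ Module.annihilator R M)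

/-- A module is Cohen–Macaulay (with respect to the ideal `P`, e.g. the graded maximal
ideal) if its depth equals its Krull dimension. -/
def IsCohenMacaulayMod (R : Type*) (M : Type*) [CommRing R] [AddCommGroup M] [Module R M]
    (P : Ideal R) : Prop := (depthWrt R M P : WithBot ℕ∞) = modKrullDim R M

/-- The depth of a local ring: max length of a regular sequence in the maximal ideal. -/
noncomputable def ringDepth (A : Type*) [CommRing A] [IsLocalRing A] : ℕ∞ :=
  depthWrt A A (IsLocalRing.maximalIdeal A)

/-- A local ring is Cohen–Macaulay if its depth equals its Krull dimension. -/
def IsCohenMacaulayLocalRing (A : Type*) [CommRing A] [IsLocalRing A] : Prop :=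
  (ringDepth A : WithBot ℕ∞) = ringKrullDim A

/-- A (commutative Noetherian) ring is Cohen–Macaulay if all its localizations at prime
ideals are Cohen–Macaulay local rings. -/
def IsCohenMacaulayRing (A : Type*) [CommRing A] : Prop :=
  ∀ (P : Ideal A) (hP : P.IsPrime), haveI := hP
    IsCohenMacaulayLocalRing (Localization.AtPrime P)

/-- The analytic spread of `I`: the Krull dimension of `R(I)/m R(I)`, where `R(I)` is the
Rees algebra of `I` and `m` the (graded maximal) ideal. -/
noncomputable def analyticSpread {R : Type*} [CommRing R] (m I : Ideal R) : WithBot ℕ∞ :=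
  ringKrullDim (↥(reesAlgebra I) ⧸ Ideal.map (algebraMap R ↥(reesAlgebra I)) m)

/-- `{p,q}` is an edge of the linear relation graph of the monomial ideal whose minimal
generators are the degree `e` squarefree monomials indexed by `gen` (positions 1-based,
within `[1,n]`). -/
def lrEdge (K : Type*) [Field K] (n : ℕ) [NeZero n] (e : ℕ) (gen : Set (ℕ → ℕ))
    (p q : ℕ) : Prop :=
  1 ≤ p ∧ p ≤ n ∧ 1 ≤ q ∧ q ≤ n ∧ p ≠ q ∧
    ∃ i ∈ gen, ∃ i' ∈ gen, xv K n p * monOf K n e i = xv K n q * monOf K n e i'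

/-- A facet of a simplicial complex: a maximal face. -/
def isFacet (Δ : Set (Finset ℕ)) (F : Finset ℕ) : Prop :=
  F ∈ Δ ∧ ∀ G ∈ Δ, F ⊆ G → F = G

/-- Vertex decomposability of a simplicial complex (faces as finsets of vertices):
either a simplex (including the void complex and `{∅}`), or there is a vertex whose
deletion and link are vertex decomposable and every facet of the deletion is a facet. -/
inductive VDecomp : Set (Finset ℕ) → Prop
  | empty : VDecomp ∅
  | simplex (A : Finset ℕ) : VDecomp {F | F ⊆ A}
  | step (Δ : Set (Finset ℕ)) (v : ℕ) (hv : ∃ F ∈ Δ, v ∈ F)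
      (hdel : VDecomp {F ∈ Δ | v ∉ F})
      (hlink : VDecomp {F | F ∈ Δ ∧ v ∉ F ∧ insert v F ∈ Δ})
      (hfac : ∀ F, isFacet {F ∈ Δ | v ∉ F} F → isFacet Δ F) : VDecomp Δ

/-- The `a`-th layer `J (a+1) / J a` of a filtration of ideals, as an `R`-module. -/
abbrev layerOf {R : Type*} [CommRing R] {r : ℕ} (J : Fin (r + 1) → Ideal R) (a : Fin r) :=
  ↥(J a.succ) ⧸ (Submodule.comap (J a.succ).subtype (J a.castSucc))

open Fin.NatCast

lemma prodX_eq (K : Type*) [Field K] (n : ℕ) [NeZero n] (s : Finset ℕ) (g : ℕ → Fin n) :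
    (∏ r ∈ s, (MvPolynomial.X (g r) : MvPolynomial (Fin n) K)) =
      MvPolynomial.monomial (∑ r ∈ s, Finsupp.single (g r) 1) 1 := by
  classical
  induction s using Finset.induction_on with
  | empty => simp [MvPolynomial.monomial_zero']
  | insert _ _ h ih =>
      rw [Finset.prod_insert h, Finset.sum_insert h, ih]
      rw [show (MvPolynomial.X (g _) : MvPolynomial (Fin n) K)
        = MvPolynomial.monomial (Finsupp.single (g _) 1) 1 from rfl,
        MvPolynomial.monomial_mul, one_mul]

lemma monOf_eq (K : Type*) [Field K] (n : ℕ) [NeZero n] (e : ℕ) (i : ℕ → ℕ) :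
    monOf K n e i = MvPolynomial.monomial
      (∑ r ∈ Finset.Icc 1 e, Finsupp.single ((i r - 1 : ℕ) : Fin n) 1) 1 := by
  rw [monOf]
  exact prodX_eq K n _ _

-- lower bound for spread indices
lemma lowbound {d : ℕ} {t J : ℕ → ℕ} {i : ℕ → ℕ} (hi : i ∈ spreadIdx d t J) :
    ∀ r, 1 ≤ r → r ≤ d → (∑ s ∈ Finset.Icc 1 (r-1), t s) + 1 ≤ i r := by
  intro r hr1
  induction r, hr1 using Nat.le_induction with
  | base => intro hd; simpa using (hi.1 1 le_rfl hd).1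
  | succ r hr ih =>
      intro hrd
      have h1 : i r + t r ≤ i (r+1) := hi.2 r hr hrd
      have h2 := ih (by omega)
      have h3 : ∑ s ∈ Finset.Icc 1 r, t s = ∑ s ∈ Finset.Icc 1 (r-1), t s + t r := by
        conv_lhs => rw [show r = (r-1) + 1 by omega]
        rw [Finset.sum_Icc_succ_top (by omega)]
        simp only [show r - 1 + 1 = r by omega]
      have h4 : (r+1) - 1 = r := by omega
      rw [h4, h3]
      omega

lemma strictmono_idx {d : ℕ} {t J i : ℕ → ℕ} (ht : ∀ k, 1 ≤ k → k ≤ d - 1 → 1 ≤ t k)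
    (hi : i ∈ spreadIdx d t J) :
    ∀ a b, 1 ≤ a → a < b → b ≤ d → i a < i b := by
  intro a b ha hab
  induction b, hab using Nat.le_induction with
  | base =>
      intro hbd
      have h1 : i a + t a ≤ i (a+1) := hi.2 a ha hbd
      have h2 : 1 ≤ t a := ht a ha (by omega)
      show i a < i (a+1)
      omega
  | succ b hb ih =>
      intro hbd
      have h1 : i b + t b ≤ i (b+1) := hi.2 b (by omega) hbd
      have h2 : 1 ≤ t b := ht b (by omega) (by omega)
      have := ih (by omega)
      omega

lemma jchain {d : ℕ} {t j : ℕ → ℕ}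
    (hspread : ∀ k, 1 ≤ k → k ≤ d - 1 → j k + t k ≤ j (k + 1)) :
    ∀ r s, 1 ≤ r → r ≤ s → s ≤ d → j r + ∑ k ∈ Finset.Icc r (s-1), t k ≤ j s := by
  intro r s hr hrs
  induction s, hrs using Nat.le_induction with
  | base =>
      intro _
      have : Finset.Icc r (r-1) = ∅ := by
        apply Finset.Icc_eq_empty; omega
      simp [this]
  | succ s hs ih =>
      intro hsd
      have h1 : j s + t s ≤ j (s+1) := hspread s (by omega) (by omega)
      have h2 := ih (by omega)
      have h3 : ∑ k ∈ Finset.Icc r s, t k = ∑ k ∈ Finset.Icc r (s-1), t k + t s := by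
        conv_lhs => rw [show s = (s-1) + 1 by omega]
        rw [Finset.sum_Icc_succ_top (by omega)]
        simp only [show s - 1 + 1 = s by omega]
      rw [show (s+1) - 1 = s by omega, h3]
      omega

lemma j_mem {d : ℕ} {t j : ℕ → ℕ} (hd : 2 ≤ d)
    (hj1 : 1 ≤ j 1) (hjmono : ∀ p q, 1 ≤ p → p < q → q ≤ d → j p < j q)
    (hspread : ∀ k, 1 ≤ k → k ≤ d - 1 → j k + t k ≤ j (k + 1)) :
    j ∈ spreadIdx d t j := by
  constructor
  · intro r hr1 hrd
    refine ⟨?_, le_rfl⟩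
    rcases eq_or_lt_of_le hr1 with h | h
    · rw [← h]; exact hj1
    · have := hjmono 1 r le_rfl h hrd; omega
  · intro r hr1 hrd
    exact hspread r hr1 (by omega)

lemma j_le_n {d n : ℕ} {j : ℕ → ℕ} (hjmono : ∀ p q, 1 ≤ p → p < q → q ≤ d → j p < j q)
    (hjd : j d = n) : ∀ s, 1 ≤ s → s ≤ d → j s ≤ n := by
  intro s hs1 hsd
  rcases eq_or_lt_of_le hsd with h | h
  · rw [h, hjd]
  · have := hjmono s d hs1 h le_rfl; omega

lemma f_mem {d : ℕ} {t j : ℕ → ℕ} (hjsp : j ∈ spreadIdx d t j)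
    (hspread : ∀ k, 1 ≤ k → k ≤ d - 1 → j k + t k ≤ j (k + 1))
    (r : ℕ) (hr1 : 1 ≤ r) (hrd : r ≤ d) (a : ℕ)
    (ha1 : (∑ s ∈ Finset.Icc 1 (r-1), t s) + 1 ≤ a) (ha2 : a + 1 ≤ j r)
    (c : ℕ) (hc1 : a ≤ c) (hc2 : c ≤ a + 1) :
    (fun s => if s < r then (∑ k ∈ Finset.Icc 1 (s-1), t k) + 1
      else if s = r then c else (a+1) + ∑ k ∈ Finset.Icc r (s-1), t k) ∈ spreadIdx d t j := by
  constructor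
  · intro s hs1 hsd
    by_cases h1 : s < r
    · simp only [if_pos h1]
      exact ⟨by omega, lowbound hjsp s hs1 hsd⟩
    · by_cases h2 : s = r
      · simp only [if_neg h1, if_pos h2]; subst h2; exact ⟨by omega, by omega⟩
      · simp only [if_neg h1, if_neg h2]
        refine ⟨by omega, ?_⟩
        have := jchain hspread r s hr1 (by omega) hsd
        omega
  · intro s hs1 hsd
    by_cases h1 : s + 1 < r
    · simp only [if_pos h1, if_pos (show s < r by omega)]
      have h3 : ∑ k ∈ Finset.Icc 1 ((s+1)-1), t k = ∑ k ∈ Finset.Icc 1 (s-1), t k + t s := by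
        rw [show (s+1)-1 = (s-1)+1 by omega, Finset.sum_Icc_succ_top (by omega)]
        simp only [show s - 1 + 1 = s by omega]
      omega
    · by_cases h2 : s + 1 = r
      · simp only [if_pos (show s < r by omega), if_neg h1, if_pos h2,
          if_neg (show ¬ r < r by omega)]
        have h3 : ∑ k ∈ Finset.Icc 1 (r-1), t k = ∑ k ∈ Finset.Icc 1 (s-1), t k + t s := by
          rw [show r - 1 = (s-1)+1 by omega, Finset.sum_Icc_succ_top (by omega)]
          simp only [show s - 1 + 1 = s by omega]
        omega
      · by_cases h3 : s = r
        · simp only [if_neg (show ¬ s < r by omega), if_pos h3, if_neg h1, if_neg h2]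
          rw [show (s+1)-1 = s by omega, h3, Finset.Icc_self, Finset.sum_singleton]
          omega
        · simp only [if_neg (show ¬ s < r by omega), if_neg h3, if_neg h1, if_neg h2]
          have h4 : ∑ k ∈ Finset.Icc r ((s+1)-1), t k
              = ∑ k ∈ Finset.Icc r (s-1), t k + t s := by
            rw [show (s+1)-1 = (s-1)+1 by omega, Finset.sum_Icc_succ_top (by omega)]
            simp only [show s - 1 + 1 = s by omega]
          omega

lemma edge_eq (K : Type*) [Field K] (n : ℕ) [NeZero n] {d r a : ℕ}
    (hr : r ∈ Finset.Icc 1 d) {g g' : ℕ → ℕ} (hg : g r = a) (hg' : g' r = a + 1)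
    (hgg : ∀ s, s ≠ r → g s = g' s) :
    xv K n (a+1) * monOf K n d g = xv K n a * monOf K n d g' := by
  classical
  rw [monOf_eq, monOf_eq,
    show xv K n (a+1)
      = MvPolynomial.monomial (Finsupp.single (((a+1) - 1 : ℕ) : Fin n) 1) (1:K) from rfl,
    show xv K n a
      = MvPolynomial.monomial (Finsupp.single ((a - 1 : ℕ) : Fin n) 1) (1:K) from rfl,
    MvPolynomial.monomial_mul, MvPolynomial.monomial_mul, one_mul]
  congr 1
  rw [← Finset.add_sum_erase _ (fun s => Finsupp.single (((g s - 1 : ℕ)) : Fin n) (1:ℕ)) hr,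
    ← Finset.add_sum_erase _ (fun s => Finsupp.single (((g' s - 1 : ℕ)) : Fin n) (1:ℕ)) hr,
    hg, hg']
  have hE : ∑ s ∈ (Finset.Icc 1 d).erase r, Finsupp.single (((g s - 1 : ℕ)) : Fin n) (1:ℕ)
      = ∑ s ∈ (Finset.Icc 1 d).erase r, Finsupp.single (((g' s - 1 : ℕ)) : Fin n) (1:ℕ) := by
    apply Finset.sum_congr rfl
    intro s hs
    rw [hgg s (Finset.ne_of_mem_erase hs)]
  rw [hE, show a + 1 - 1 = a by omega]
  abel_nf

/-- **Proposition (a).** Let `Γ` be the linear relation graph of `I = B_t(u)` and, for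
`r = 1,…,d`, let `B_r = [t 1 + ⋯ + t (r-1) + 1, j r]`.  Then `|B_r| ≥ 2` iff
`B_r ⊆ V(Γ)`. -/
theorem stmt12 (K : Type*) [Field K] (n d : ℕ) [NeZero n] (t j : ℕ → ℕ)
    (hd : 2 ≤ d) (ht : ∀ k, 1 ≤ k → k ≤ d - 1 → 1 ≤ t k)
    (hj1 : 1 ≤ j 1) (hjmono : ∀ p q, 1 ≤ p → p < q → q ≤ d → j p < j q)
    (hjd : j d = n) (hspread : ∀ k, 1 ≤ k → k ≤ d - 1 → j k + t k ≤ j (k + 1)) :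
    ∀ r, 1 ≤ r → r ≤ d →
      (2 ≤ (Finset.Icc ((∑ s ∈ Finset.Icc 1 (r - 1), t s) + 1) (j r)).card ↔
        ∀ p ∈ Finset.Icc ((∑ s ∈ Finset.Icc 1 (r - 1), t s) + 1) (j r),
          ∃ q, lrEdge K n d (spreadIdx d t j) p q) := by
  intro r hr1 hrd
  have hjsp : j ∈ spreadIdx d t j := j_mem hd hj1 hjmono hspread
  have hTj : (∑ s ∈ Finset.Icc 1 (r-1), t s) + 1 ≤ j r := lowbound hjsp r hr1 hrd
  have hjrn : j r ≤ n := j_le_n hjmono hjd r hr1 hrd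
  constructor
  · intro hcard p hp
    rw [Nat.card_Icc] at hcard
    rw [Finset.mem_Icc] at hp
    have key : ∀ a, (∑ s ∈ Finset.Icc 1 (r-1), t s) + 1 ≤ a → a + 1 ≤ j r →
        lrEdge K n d (spreadIdx d t j) a (a+1) ∧ lrEdge K n d (spreadIdx d t j) (a+1) a := by
      intro a ha1 ha2
      set f : ℕ → ℕ → ℕ := fun c s => if s < r then (∑ k ∈ Finset.Icc 1 (s-1), t k) + 1
        else if s = r then c else (a+1) + ∑ k ∈ Finset.Icc r (s-1), t k with hf
      have hmem : ∀ c, a ≤ c → c ≤ a + 1 → f c ∈ spreadIdx d t j := fun c hc1 hc2 =>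
        f_mem hjsp hspread r hr1 hrd a ha1 ha2 c hc1 hc2
      have hfa : f a r = a := by simp [hf]
      have hfa1 : f (a+1) r = a + 1 := by simp [hf]
      have hgg : ∀ s, s ≠ r → f a s = f (a+1) s := by
        intro s hs
        simp only [hf]
        by_cases h : s < r
        · simp [if_pos h]
        · simp [if_neg h, if_neg hs]
      have heq := edge_eq K n (d := d) (r := r) (a := a) (g := f a) (g' := f (a+1)) (Finset.mem_Icc.mpr ⟨hr1, hrd⟩) hfa hfa1 hgg
      have han : a + 1 ≤ n := le_trans ha2 hjrn
      exact ⟨⟨by omega, by omega, by omega, by omega, by omega,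
        f (a+1), hmem (a+1) (by omega) le_rfl, f a, hmem a le_rfl (by omega), heq.symm⟩,
        ⟨by omega, by omega, by omega, by omega, by omega,
        f a, hmem a le_rfl (by omega), f (a+1), hmem (a+1) (by omega) le_rfl, heq⟩⟩
    rcases lt_or_eq_of_le hp.2 with h | h
    · exact ⟨p+1, (key p hp.1 (by omega)).1⟩
    · refine ⟨p-1, ?_⟩
      have := (key (p-1) (by omega) (by omega)).2
      rwa [show p - 1 + 1 = p by omega] at this
  · intro hall
    rw [Nat.card_Icc]
    by_contra hcard
    obtain ⟨q, hq⟩ := hall (j r) (Finset.mem_Icc.mpr ⟨hTj, le_rfl⟩)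
    obtain ⟨hp1, hpn, hq1, hqn, hpq, i, hi, i', hi', heq⟩ := hq
    rw [monOf_eq, monOf_eq,
      show xv K n (j r)
        = MvPolynomial.monomial (Finsupp.single (((j r) - 1 : ℕ) : Fin n) 1) (1:K) from rfl,
      show xv K n q
        = MvPolynomial.monomial (Finsupp.single ((q - 1 : ℕ) : Fin n) 1) (1:K) from rfl,
      MvPolynomial.monomial_mul, MvPolynomial.monomial_mul, one_mul] at heq
    have hexp := MvPolynomial.monomial_left_injective (one_ne_zero (α := K)) heq
    have hc := DFunLike.congr_fun hexp (((j r - 1 : ℕ)) : Fin n)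
    have hqp : ((q - 1 : ℕ) : Fin n) ≠ ((j r - 1 : ℕ) : Fin n) := by
      intro h
      have hv := congrArg Fin.val h
      rw [Fin.val_cast_of_lt (show q - 1 < n by omega),
        Fin.val_cast_of_lt (show j r - 1 < n by omega)] at hv
      omega
    simp only [Finsupp.add_apply, Finsupp.finset_sum_apply, Finsupp.single_apply,
      if_pos rfl, if_neg hqp, if_true, eq_self_iff_true] at hc
    have hir : i r = j r := by
      have hb := (hi.1 r hr1 hrd).2
      have h2 := lowbound hi r hr1 hrd
      omega
    have hL : 1 ≤ ∑ s ∈ Finset.Icc 1 d,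
        if ((i s - 1 : ℕ) : Fin n) = ((j r - 1 : ℕ) : Fin n) then 1 else 0 := by
      have h0 : (if ((i r - 1 : ℕ) : Fin n) = ((j r - 1 : ℕ) : Fin n) then 1 else 0) = 1 := by
        rw [hir, if_pos rfl]
      have h1 := Finset.single_le_sum
        (f := fun s => if ((i s - 1 : ℕ) : Fin n) = ((j r - 1 : ℕ) : Fin n) then (1:ℕ) else 0)
        (fun s _ => Nat.zero_le _) (Finset.mem_Icc.mpr ⟨hr1, hrd⟩)
      omega
    have hR : (∑ s ∈ Finset.Icc 1 d,
        if ((i' s - 1 : ℕ) : Fin n) = ((j r - 1 : ℕ) : Fin n) then 1 else 0) ≤ 1 := by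
      rw [Finset.sum_boole, Nat.cast_id]
      apply Finset.card_le_one.mpr
      intro a ha b hb
      rw [Finset.mem_filter, Finset.mem_Icc] at ha hb
      have hval : ∀ m, 1 ≤ m → m ≤ d →
          ((i' m - 1 : ℕ) : Fin n) = ((j r - 1 : ℕ) : Fin n) → i' m = j r := by
        intro m hm1 hmd hcast
        have hb1 := (hi'.1 m hm1 hmd).1
        have hb2 := (hi'.1 m hm1 hmd).2
        have hmn : i' m ≤ n := le_trans hb2 (j_le_n hjmono hjd m hm1 hmd)
        have hv := congrArg Fin.val hcast
        rw [Fin.val_cast_of_lt (show i' m - 1 < n by omega),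
          Fin.val_cast_of_lt (show j r - 1 < n by omega)] at hv
        omega
      have hia : i' a = j r := hval a ha.1.1 ha.1.2 ha.2
      have hib : i' b = j r := hval b hb.1.1 hb.1.2 hb.2
      rcases lt_trichotomy a b with h | h | h
      · have := strictmono_idx ht hi' a b ha.1.1 h hb.1.2; omega
      · exact h
      · have := strictmono_idx ht hi' b a hb.1.1 h ha.1.2; omega
    omega
end

section
/- Assume j_r > t_1 + ... + t_{r-1} + 1 for all r = 1,...,d and j_r <= t_1 + ... + t_r for all r = 1,...,d-1, and set I = B_t(u). Fix i in {1,...,d} and define a t-spread monomial v as follows: if i = 1 or j_i - j_{i-1} > t_{i-1}, set v = x_{j_i - 1}·(u/x_{j_i}); otherwise let l = max{ m >= 2 : j_p - j_{p-1} = t_{p-1} for all p = m,...,i } and set v = (prod_{r=1}^{l-2} x_{j_r})·(prod_{r=l-1}^{i} x_{j_r - 1})·(prod_{r=i+1}^{d} x_{j_r}). Then the restriction I^{<= 1 - e_{j_i}} equals B_t(v), where 1 - e_{j_i} is the 0/1 exponent vector whose j_i-th entry is 0 and all other entries are 1. -/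
open Finset MvPolynomial

/-- The restriction `I^{≤ 1 - e_{j i}}` of `I = B_t(u)`: the ideal generated by the
minimal monomial generators of `I` not divisible by `x_{j i}` (all generators being
squarefree). -/
noncomputable def restrAt (K : Type*) [Field K] (n d : ℕ) [NeZero n] (t j : ℕ → ℕ)
    (i₀ : ℕ) : Ideal (MvPolynomial (Fin n) K) :=
  Ideal.span {m | m ∈ (fun i => monOf K n d i) '' spreadIdx d t j ∧ ¬ xv K n (j i₀) ∣ m}

open Fin.NatCast in
lemma not_dvd_prod (K : Type*) [Field K] (n : ℕ) [NeZero n] (p : ℕ) (s : Finset ℕ)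
    (f : ℕ → ℕ) (h : ∀ r ∈ s, ((f r - 1 : ℕ) : Fin n) ≠ ((p - 1 : ℕ) : Fin n)) :
    ¬ xv K n p ∣ ∏ r ∈ s, xv K n (f r) := by
  rintro ⟨q, hq⟩
  set a : Fin n := ((p - 1 : ℕ) : Fin n) with ha
  set φ := aeval (R := K) (fun b : Fin n => if b = a then (0 : K) else 1) with hφ
  have h1 : φ (∏ r ∈ s, xv K n (f r)) = 1 := by
    rw [map_prod]
    refine Finset.prod_eq_one (fun r hr => ?_)
    simp [xv, hφ, if_neg (h r hr)]
  rw [hq, map_mul] at h1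
  have h2 : φ (xv K n p) = 0 := by simp [xv, hφ, ← ha]
  rw [h2, zero_mul] at h1
  exact zero_ne_one h1

lemma growth (t i : ℕ → ℕ) (d : ℕ) (h1 : 1 ≤ i 1)
    (hsp : ∀ r, 1 ≤ r → r + 1 ≤ d → i r + t r ≤ i (r + 1)) :
    ∀ r, 1 ≤ r → r ≤ d → 1 + ∑ s ∈ Finset.Icc 1 (r - 1), t s ≤ i r := by
  intro r
  induction r with
  | zero => omega
  | succ m ih =>
    intro _ hmd
    rcases Nat.eq_zero_or_pos m with hm | hm
    · subst hm; simpa using h1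
    · have h2 : 1 + ∑ s ∈ Finset.Icc 1 (m - 1), t s ≤ i m := ih hm (by omega)
      have h3 : i m + t m ≤ i (m + 1) := hsp m hm hmd
      have h4 : ∑ s ∈ Finset.Icc 1 m, t s = ∑ s ∈ Finset.Icc 1 (m - 1), t s + t m := by
        have he : m = (m - 1) + 1 := by omega
        rw [he, Finset.sum_Icc_succ_top (by omega)]
        rw [show m - 1 + 1 - 1 = m - 1 from by omega]
      simp only [Nat.add_sub_cancel]
      omega

open Fin.NatCast in
lemma restr_eq (K : Type*) [Field K] (n d : ℕ) [NeZero n] (t j J' : ℕ → ℕ) (i₀ : ℕ)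
    (hjn : ∀ r, 1 ≤ r → r ≤ d → j r ≤ n) (hi₀1 : 1 ≤ i₀) (hi₀d : i₀ ≤ d)
    (hji : 1 ≤ j i₀) (hJ'le : ∀ r, 1 ≤ r → r ≤ d → J' r ≤ j r)
    (hnot : ∀ i ∈ spreadIdx d t J', ∀ r, 1 ≤ r → r ≤ d → i r ≠ j i₀)
    (hback : ∀ i ∈ spreadIdx d t j, (∀ r, 1 ≤ r → r ≤ d → i r ≠ j i₀) →
      i ∈ spreadIdx d t J') :
    restrAt K n d t j i₀ = tBorel K n d t J' := by
  have hn : 1 ≤ n := Nat.one_le_iff_ne_zero.mpr (NeZero.ne n)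
  unfold restrAt tBorel
  congr 1
  ext m
  constructor
  · rintro ⟨⟨i, hi, rfl⟩, hnd⟩
    refine ⟨i, hback i hi ?_, rfl⟩
    intro r h1 h2 heq
    refine hnd ?_
    show xv K n (j i₀) ∣ ∏ r ∈ Finset.Icc 1 d, xv K n (i r)
    rw [← heq]
    exact Finset.dvd_prod_of_mem (fun r => xv K n (i r)) (Finset.mem_Icc.mpr ⟨h1, h2⟩)
  · rintro ⟨i, hi, rfl⟩
    have hmem : i ∈ spreadIdx d t j :=
      ⟨fun r h1 h2 => ⟨(hi.1 r h1 h2).1, le_trans (hi.1 r h1 h2).2 (hJ'le r h1 h2)⟩, hi.2⟩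
    refine ⟨⟨i, hmem, rfl⟩, ?_⟩
    show ¬ xv K n (j i₀) ∣ ∏ r ∈ Finset.Icc 1 d, xv K n (i r)
    apply not_dvd_prod
    intro r hr heq
    rw [Finset.mem_Icc] at hr
    have h1 : 1 ≤ i r := (hi.1 r hr.1 hr.2).1
    have h2 : i r ≤ n := le_trans (le_trans (hi.1 r hr.1 hr.2).2 (hJ'le r hr.1 hr.2))
      (hjn r hr.1 hr.2)
    have h3 : j i₀ ≤ n := hjn i₀ hi₀1 hi₀d
    have hne := hnot i hi r hr.1 hr.2
    have hv : ((i r - 1 : ℕ) : Fin n).val = i r - 1 := by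
      simp [Fin.val_natCast, Nat.mod_eq_of_lt (show i r - 1 < n by omega)]
    have hv2 : ((j i₀ - 1 : ℕ) : Fin n).val = j i₀ - 1 := by
      simp [Fin.val_natCast, Nat.mod_eq_of_lt (show j i₀ - 1 < n by omega)]
    have hvv := congrArg Fin.val heq
    rw [hv, hv2] at hvv
    omega

/-- Assume `j r > t 1 + ⋯ + t (r-1) + 1` for all `r = 1,…,d` and `j r ≤ t 1 + ⋯ + t r`
for `r = 1,…,d-1`, and fix `i₀ ∈ {1,…,d}`.  If `i₀ = 1` or `j i₀ - j (i₀-1) > t (i₀-1)`,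
then `I^{≤ 1 - e_{j i₀}} = B_t(v)` with `v = x_{j i₀ - 1}·(u / x_{j i₀})`; otherwise,
letting `l` be the least `m ≥ 2` with `j p - j (p-1) = t (p-1)` for all `p = m,…,i₀`
(so that `l` gives the longest such run, i.e. the maximal set of indices), one has
`I^{≤ 1 - e_{j i₀}} = B_t(v)` with
`v = (∏_{r=1}^{l-2} x_{j r})·(∏_{r=l-1}^{i₀} x_{j r - 1})·(∏_{r=i₀+1}^{d} x_{j r})`. -/
theorem stmt17 (K : Type*) [Field K] (n d : ℕ) [NeZero n] (t j : ℕ → ℕ)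
    (hd : 2 ≤ d) (ht : ∀ k, 1 ≤ k → k ≤ d - 1 → 1 ≤ t k)
    (hj1 : 1 ≤ j 1) (hjmono : ∀ p q, 1 ≤ p → p < q → q ≤ d → j p < j q)
    (hjd : j d = n) (hspread : ∀ k, 1 ≤ k → k ≤ d - 1 → j k + t k ≤ j (k + 1))
    (hlow : ∀ r, 1 ≤ r → r ≤ d → (∑ s ∈ Finset.Icc 1 (r - 1), t s) + 1 < j r)
    (hup : ∀ r, 1 ≤ r → r ≤ d - 1 → j r ≤ ∑ s ∈ Finset.Icc 1 r, t s)
    (i₀ : ℕ) (hi₀1 : 1 ≤ i₀) (hi₀d : i₀ ≤ d) :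
    ((i₀ = 1 ∨ j (i₀ - 1) + t (i₀ - 1) < j i₀) →
      restrAt K n d t j i₀ =
        tBorel K n d t (fun r => if r = i₀ then j i₀ - 1 else j r)) ∧
    (¬ (i₀ = 1 ∨ j (i₀ - 1) + t (i₀ - 1) < j i₀) →
      ∀ l : ℕ, 2 ≤ l →
        (∀ p, l ≤ p → p ≤ i₀ → j p = j (p - 1) + t (p - 1)) →
        (∀ m, 2 ≤ m → (∀ p, m ≤ p → p ≤ i₀ → j p = j (p - 1) + t (p - 1)) → l ≤ m) →
        restrAt K n d t j i₀ =
          tBorel K n d t (fun r => if l - 1 ≤ r ∧ r ≤ i₀ then j r - 1 else j r)) := by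
  have hjn : ∀ r, 1 ≤ r → r ≤ d → j r ≤ n := by
    intro r h1 h2
    rcases eq_or_lt_of_le h2 with h | h
    · rw [h, hjd]
    · rw [← hjd]; exact le_of_lt (hjmono r d h1 h le_rfl)
  have hjpos : ∀ r, 1 ≤ r → r ≤ d → 1 ≤ j r := by
    intro r h1 h2
    rcases eq_or_lt_of_le h1 with h | h
    · rw [← h]; exact hj1
    · exact le_trans hj1 (le_of_lt (hjmono 1 r le_rfl h h2))
  have hji : 1 ≤ j i₀ := hjpos i₀ hi₀1 hi₀d
  have hgt : ∀ (i : ℕ → ℕ), 1 ≤ i 1 → (∀ r, 1 ≤ r → r + 1 ≤ d → i r + t r ≤ i (r + 1)) →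
      ∀ r, i₀ < r → r ≤ d → j i₀ < i r := by
    intro i hi1 hisp r hir hrd
    have hg := growth t i d hi1 hisp r (by omega) hrd
    have hs : ∑ s ∈ Finset.Icc 1 i₀, t s ≤ ∑ s ∈ Finset.Icc 1 (r - 1), t s :=
      Finset.sum_le_sum_of_subset (Finset.Icc_subset_Icc le_rfl (by omega))
    have hu := hup i₀ hi₀1 (by omega)
    omega
  constructor
  · intro _
    refine restr_eq K n d t j _ i₀ hjn hi₀1 hi₀d hji ?_ ?_ ?_
    · intro r h1 h2
      by_cases h : r = i₀ <;> simp [h]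
    · intro i hi r h1 h2 heq
      have hb : i r ≤ if r = i₀ then j i₀ - 1 else j r := (hi.1 r h1 h2).2
      rcases lt_trichotomy r i₀ with h | h | h
      · rw [if_neg (by omega)] at hb
        have := hjmono r i₀ h1 h hi₀d
        omega
      · rw [if_pos h] at hb; omega
      · have := hgt i (hi.1 1 le_rfl (by omega)).1 hi.2 r h h2; omega
    · intro i hi hne
      refine ⟨fun r h1 h2 => ⟨(hi.1 r h1 h2).1, ?_⟩, hi.2⟩
      show i r ≤ if r = i₀ then j i₀ - 1 else j r
      have hb := (hi.1 r h1 h2).2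
      by_cases h : r = i₀
      · rw [if_pos h]; subst h; have := hne r h1 h2; omega
      · rw [if_neg h]; exact hb
  · intro hneg l hl2 hrun hmin
    have hi₀2 : 2 ≤ i₀ := by
      rcases Nat.lt_or_ge i₀ 2 with h | h
      · exact absurd (Or.inl (by omega)) hneg
      · exact h
    have heqr : j i₀ = j (i₀ - 1) + t (i₀ - 1) := by
      have h1 := hspread (i₀ - 1) (by omega) (by omega)
      rw [show i₀ - 1 + 1 = i₀ from by omega] at h1
      have h2 : ¬ j (i₀ - 1) + t (i₀ - 1) < j i₀ := fun h => hneg (Or.inr h)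
      omega
    have hli₀ : l ≤ i₀ := hmin i₀ hi₀2 (fun p hp1 hp2 => by
      rw [le_antisymm hp2 hp1]; exact heqr)
    refine restr_eq K n d t j _ i₀ hjn hi₀1 hi₀d hji ?_ ?_ ?_
    · intro r h1 h2
      show (if l - 1 ≤ r ∧ r ≤ i₀ then j r - 1 else j r) ≤ j r
      split_ifs <;> omega
    · intro i hi r h1 h2 heq
      have hb : i r ≤ if l - 1 ≤ r ∧ r ≤ i₀ then j r - 1 else j r := (hi.1 r h1 h2).2
      rcases lt_trichotomy r i₀ with h | h | h
      · have hlt := hjmono r i₀ h1 h hi₀d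
        by_cases hc : l - 1 ≤ r ∧ r ≤ i₀
        · rw [if_pos hc] at hb; omega
        · rw [if_neg hc] at hb; omega
      · subst h
        rw [if_pos ⟨by omega, le_rfl⟩] at hb; omega
      · have := hgt i (hi.1 1 le_rfl (by omega)).1 hi.2 r h h2; omega
    · intro i hi hne
      have hii₀ : i i₀ < j i₀ :=
        lt_of_le_of_ne (hi.1 i₀ hi₀1 hi₀d).2 (hne i₀ hi₀1 hi₀d)
      have key : ∀ m r, l - 1 ≤ r → r ≤ i₀ → i₀ - r ≤ m → i r < j r := by
        intro m
        induction m with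
        | zero =>
          intro r h1 h2 h3
          rw [show r = i₀ from by omega]; exact hii₀
        | succ m ih =>
          intro r h1 h2 h3
          rcases eq_or_lt_of_le h2 with h | h
          · rw [h]; exact hii₀
          · have hs := hi.2 r (by omega) (by omega)
            have h4 := ih (r + 1) (by omega) (by omega) (by omega)
            have h5 := hrun (r + 1) (by omega) (by omega)
            rw [Nat.add_sub_cancel] at h5
            omega
      refine ⟨fun r h1 h2 => ⟨(hi.1 r h1 h2).1, ?_⟩, hi.2⟩
      show i r ≤ if l - 1 ≤ r ∧ r ≤ i₀ then j r - 1 else j r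
      have hb := (hi.1 r h1 h2).2
      by_cases h : l - 1 ≤ r ∧ r ≤ i₀
      · rw [if_pos h]
        have := key i₀ r h.1 h.2 (by omega)
        omega
      · rw [if_neg h]; exact hb
end

section
/- Suppose r in {1,...,d-1} satisfies j_r = t_1 + ... + t_{r-1} + 1. Then j_p = t_1 + ... + t_{p-1} + 1 for all p = 1,...,r, and B_t(u) = (x_{j_1} x_{j_2} ... x_{j_r}) · J, where J is the ideal of S generated by all monomials x_{i_{r+1}} x_{i_{r+2}} ... x_{i_d} with j_r + t_r <= i_{r+1}, i_{p+1} - i_p >= t_p for p = r+1,...,d-1, and i_p <= j_p for all p = r+1,...,d. -/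
open Finset MvPolynomial

section CrupiHelpers

open Pointwise

private lemma crupi_lower (d : ℕ) (t c : ℕ → ℕ) (hc1 : 1 ≤ c 1)
    (hcs : ∀ k, 1 ≤ k → k + 1 ≤ d → c k + t k ≤ c (k + 1)) :
    ∀ p, 1 ≤ p → p ≤ d → (∑ s ∈ Finset.Icc 1 (p - 1), t s) + 1 ≤ c p := by
  intro p
  induction p with
  | zero => omega
  | succ p ih =>
    intro _ hpd
    rcases Nat.eq_zero_or_pos p with h0 | hp
    · subst h0; simpa using hc1
    · have h1 := ih hp (by omega)
      have h2 := hcs p hp hpd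
      have hs : ∑ s ∈ Finset.Icc 1 p, t s
          = (∑ s ∈ Finset.Icc 1 (p - 1), t s) + t p := by
        obtain ⟨q, rfl⟩ : ∃ q, p = q + 1 := ⟨p - 1, by omega⟩
        rw [Finset.sum_Icc_succ_top (by omega)]
        simp
      have he : p + 1 - 1 = p := by omega
      rw [he, hs]
      omega

private lemma crupi_chain (d : ℕ) (t c : ℕ → ℕ) (a : ℕ) (ha : 1 ≤ a)
    (hcs : ∀ k, a ≤ k → k + 1 ≤ d → c k + t k ≤ c (k + 1)) :
    ∀ b, a ≤ b → b ≤ d → c a + ∑ s ∈ Finset.Icc a (b - 1), t s ≤ c b := by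
  intro b
  induction b with
  | zero => omega
  | succ b ih =>
    intro hab hbd
    rcases Nat.lt_or_ge b a with h0 | hab'
    · have : a = b + 1 := by omega
      subst this
      rw [Finset.Icc_eq_empty (by omega)]
      simp
    · have h1 := ih hab' (by omega)
      have h2 := hcs b (by omega) hbd
      have hs : ∑ s ∈ Finset.Icc a b, t s
          = (∑ s ∈ Finset.Icc a (b - 1), t s) + t b := by
        obtain ⟨q, rfl⟩ : ∃ q, b = q + 1 := ⟨b - 1, by omega⟩
        rw [Finset.sum_Icc_succ_top (by omega)]
        simp
      have he : b + 1 - 1 = b := by omega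
      rw [he, hs]
      omega

private lemma crupi_sumSplit (t : ℕ → ℕ) (p r : ℕ) (h1 : 1 ≤ p) (h2 : p ≤ r) :
    ∑ s ∈ Finset.Icc 1 (r - 1), t s
      = (∑ s ∈ Finset.Icc 1 (p - 1), t s) + ∑ s ∈ Finset.Icc p (r - 1), t s := by
  have e1 : Finset.Icc 1 (r - 1) = Finset.Ioc 0 (r - 1) := by ext x; simp; omega
  have e2 : Finset.Icc 1 (p - 1) = Finset.Ioc 0 (p - 1) := by ext x; simp; omega
  have e3 : Finset.Icc p (r - 1) = Finset.Ioc (p - 1) (r - 1) := by ext x; simp; omega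
  rw [e1, e2, e3, Finset.sum_Ioc_consecutive t (by omega) (by omega)]

private lemma crupi_prodSplit {M : Type*} [CommMonoid M] (f : ℕ → M) (r d : ℕ)
    (hrd : r ≤ d) :
    ∏ p ∈ Finset.Icc 1 d, f p
      = (∏ p ∈ Finset.Icc 1 r, f p) * ∏ p ∈ Finset.Icc (r + 1) d, f p := by
  have e1 : Finset.Icc 1 d = Finset.Ioc 0 d := by ext x; simp; omega
  have e2 : Finset.Icc 1 r = Finset.Ioc 0 r := by ext x; simp; omega
  have e3 : Finset.Icc (r + 1) d = Finset.Ioc r d := by ext x; simp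
  rw [e1, e2, e3, Finset.prod_Ioc_consecutive f (by omega) hrd]

private lemma crupi_span_image_mul {R : Type*} [CommRing R] (a : R) (u : Set R) :
    Ideal.span {a} * Ideal.span u = Ideal.span ((fun x => a * x) '' u) := by
  rw [Ideal.span_mul_span', Set.singleton_mul]

end CrupiHelpers

/-- If `r ∈ {1,…,d-1}` satisfies `j r = t 1 + ⋯ + t (r-1) + 1`, then
`j p = t 1 + ⋯ + t (p-1) + 1` for all `p = 1,…,r`, and
`B_t(u) = (x_{j 1} ⋯ x_{j r}) · J`, where `J` is generated by all monomials
`x_{i (r+1)} ⋯ x_{i d}` with `j r + t r ≤ i (r+1)`, `i (p+1) - i p ≥ t p` for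
`p = r+1,…,d-1`, and `i p ≤ j p` for `p = r+1,…,d`. -/
theorem stmt19 (K : Type*) [Field K] (n d : ℕ) [NeZero n] (t j : ℕ → ℕ)
    (hd : 2 ≤ d) (ht : ∀ k, 1 ≤ k → k ≤ d - 1 → 1 ≤ t k)
    (hj1 : 1 ≤ j 1) (hjmono : ∀ p q, 1 ≤ p → p < q → q ≤ d → j p < j q)
    (hjd : j d = n) (hspread : ∀ k, 1 ≤ k → k ≤ d - 1 → j k + t k ≤ j (k + 1))
    (r : ℕ) (hr1 : 1 ≤ r) (hrd : r ≤ d - 1)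
    (hjr : j r = (∑ s ∈ Finset.Icc 1 (r - 1), t s) + 1) :
    (∀ p, 1 ≤ p → p ≤ r → j p = (∑ s ∈ Finset.Icc 1 (p - 1), t s) + 1) ∧
    tBorel K n d t j =
      Ideal.span {∏ p ∈ Finset.Icc 1 r, xv K n (j p)} *
        Ideal.span ((fun i => ∏ p ∈ Finset.Icc (r + 1) d, xv K n (i p)) ''
          {i : ℕ → ℕ | j r + t r ≤ i (r + 1) ∧
            (∀ p, r + 1 ≤ p → p ≤ d → i p ≤ j p) ∧
            (∀ p, r + 1 ≤ p → p + 1 ≤ d → i p + t p ≤ i (p + 1))}) := by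
  have hjlow := crupi_lower d t j hj1 (fun k hk hkd => hspread k hk (by omega))
  have part1 : ∀ p, 1 ≤ p → p ≤ r → j p = (∑ s ∈ Finset.Icc 1 (p - 1), t s) + 1 := by
    intro p hp1 hpr
    have hlo := hjlow p hp1 (by omega)
    have hch := crupi_chain d t j p hp1
      (fun k hk hkd => hspread k (by omega) (by omega)) r hpr (by omega)
    have hsp := crupi_sumSplit t p r hp1 hpr
    omega
  refine ⟨part1, ?_⟩
  rw [crupi_span_image_mul]
  unfold tBorel
  congr 1
  ext y
  constructor
  · rintro ⟨i, hi, rfl⟩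
    obtain ⟨hbd, hsp⟩ := hi
    have hieq : ∀ p, 1 ≤ p → p ≤ r → i p = j p := by
      intro p hp1 hpr
      have hlo := crupi_lower d t i (hbd 1 le_rfl (by omega)).1 hsp p hp1 (by omega)
      have h2 := (hbd p hp1 (by omega)).2
      have h3 := part1 p hp1 hpr
      omega
    have hpr1 : ∏ p ∈ Finset.Icc 1 r, xv K n (i p)
        = ∏ p ∈ Finset.Icc 1 r, xv K n (j p) :=
      Finset.prod_congr rfl fun p hp => by
        obtain ⟨h1, h2⟩ := Finset.mem_Icc.mp hp
        rw [hieq p h1 h2]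
    have heq : monOf K n d i
        = (∏ p ∈ Finset.Icc 1 r, xv K n (j p)) *
            ∏ p ∈ Finset.Icc (r + 1) d, xv K n (i p) := by
      rw [monOf, crupi_prodSplit (fun p => xv K n (i p)) r d (by omega), hpr1]
    have hJ1 : j r + t r ≤ i (r + 1) := by
      rw [← hieq r hr1 le_rfl]
      exact hsp r hr1 (by omega)
    exact ⟨∏ p ∈ Finset.Icc (r + 1) d, xv K n (i p),
      ⟨i, ⟨hJ1, fun p h1 h2 => (hbd p (by omega) h2).2,
        fun p h1 h2 => hsp p (by omega) h2⟩, rfl⟩, heq.symm⟩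
  · rintro ⟨_, ⟨i, hi, rfl⟩, rfl⟩
    obtain ⟨hfirst, hbd, hsp⟩ := hi
    have hjr1 : 1 ≤ j r := by have := hjlow r hr1 (by omega); omega
    have hlow' : ∀ p, r + 1 ≤ p → p ≤ d → 1 ≤ i p := by
      intro p hp1 hpd
      have := crupi_chain d t i (r + 1) (by omega) hsp p hp1 hpd
      omega
    have hbound : ∀ p, 1 ≤ p → p ≤ d →
        1 ≤ (if p ≤ r then j p else i p) ∧ (if p ≤ r then j p else i p) ≤ j p := by
      intro p hp1 hpd
      by_cases hpr : p ≤ r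
      · rw [if_pos hpr]
        refine ⟨?_, le_rfl⟩
        have := hjlow p hp1 (by omega)
        omega
      · rw [if_neg hpr]
        exact ⟨hlow' p (by omega) hpd, hbd p (by omega) hpd⟩
    have hspr2 : ∀ k, 1 ≤ k → k + 1 ≤ d →
        (if k ≤ r then j k else i k) + t k
          ≤ (if k + 1 ≤ r then j (k + 1) else i (k + 1)) := by
      intro k hk1 hkd
      by_cases hkr : k + 1 ≤ r
      · rw [if_pos (by omega : k ≤ r), if_pos hkr]
        exact hspread k hk1 (by omega)
      · by_cases hkr2 : k ≤ r
        · have hk : k = r := by omega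
          rw [if_pos hkr2, if_neg hkr, hk]
          exact hfirst
        · rw [if_neg hkr2, if_neg hkr]
          exact hsp k (by omega) hkd
    have hpr1 : ∏ p ∈ Finset.Icc 1 r, xv K n (if p ≤ r then j p else i p)
        = ∏ p ∈ Finset.Icc 1 r, xv K n (j p) :=
      Finset.prod_congr rfl fun p hp => by
        rw [if_pos (Finset.mem_Icc.mp hp).2]
    have hpr2 : ∏ p ∈ Finset.Icc (r + 1) d, xv K n (if p ≤ r then j p else i p)
        = ∏ p ∈ Finset.Icc (r + 1) d, xv K n (i p) :=
      Finset.prod_congr rfl fun p hp => by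
        have h1 := (Finset.mem_Icc.mp hp).1
        rw [if_neg (by omega : ¬ (p ≤ r))]
    have heq : monOf K n d (fun p => if p ≤ r then j p else i p)
        = (∏ p ∈ Finset.Icc 1 r, xv K n (j p)) *
            ∏ p ∈ Finset.Icc (r + 1) d, xv K n (i p) := by
      rw [monOf,
        crupi_prodSplit (fun p => xv K n (if p ≤ r then j p else i p)) r d (by omega),
        hpr1, hpr2]
    exact ⟨fun p => if p ≤ r then j p else i p, ⟨hbound, hspr2⟩, heq⟩
end
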